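/- arXiv:2001.01200 — 2 statements merged into one kernel-verified Lean document; each statement's English description precedes it below -/
import Mathlib

section
/- Let V be a 6-dimensional real vector space with basis dual coordinates v^1,w^1,v^2,w^2,v^3,w^3, and let ψ₀ = Im((v^1+i w^1)∧(v^2+i w^2)∧(v^3+i w^3)) = -w^{123} + w^1∧v^{23} + w^2∧v^{31} + w^3∧v^{12}. Then for every nonzero vector v ∈ V, the 2-form ι(v)ψ₀ obtained by interior product has rank 4 (i.e., (ι(v)ψ₀)∧(ι(v)ψ₀) ≠ 0 but (ι(v)ψ₀)^3 = 0 as forms on V). -/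
noncomputable section

/-- `V = ℝ^6`, presented as pairs `(v-coordinates, w-coordinates)`. -/
abbrev V6 : Type := (Fin 3 → ℝ) × (Fin 3 → ℝ)

/-- The dual coordinates `v^1, v^2, v^3`. -/
def vco (i : Fin 3) : Module.Dual ℝ V6 := (LinearMap.proj i).comp (LinearMap.fst ℝ _ _)

/-- The dual coordinates `w^1, w^2, w^3`. -/
def wco (i : Fin 3) : Module.Dual ℝ V6 := (LinearMap.proj i).comp (LinearMap.snd ℝ _ _)

open ExteriorAlgebra

/-- The standard definite 3-form
`ψ₀ = Im((v^1+iw^1)∧(v^2+iw^2)∧(v^3+iw^3)) = -w^{123} + w^1∧v^{23} + w^2∧v^{31} + w^3∧v^{12}`,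
as an element of the exterior algebra of the dual space. -/
def psi0 : ExteriorAlgebra ℝ (Module.Dual ℝ V6) :=
  -(ι ℝ (wco 0) * ι ℝ (wco 1) * ι ℝ (wco 2))
    + ι ℝ (wco 0) * ι ℝ (vco 1) * ι ℝ (vco 2)
    + ι ℝ (wco 1) * ι ℝ (vco 2) * ι ℝ (vco 0)
    + ι ℝ (wco 2) * ι ℝ (vco 0) * ι ℝ (vco 1)

/-- Interior product `ι(x)` of a vector `x : V` with a form, i.e. left contraction on the
exterior algebra of the dual of `V`. -/
def intProd (x : V6) (φ : ExteriorAlgebra ℝ (Module.Dual ℝ V6)) :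
    ExteriorAlgebra ℝ (Module.Dual ℝ V6) :=
  CliffordAlgebra.contractLeft (Module.Dual.eval ℝ V6 x) φ

lemma ι_swap2 (m n : Module.Dual ℝ V6) :
    ι ℝ m * ι ℝ n = -(ι ℝ n * ι ℝ m) :=
  eq_neg_of_add_eq_zero_left (ι_add_mul_swap m n)

lemma ι_swap3 (m n : Module.Dual ℝ V6) (z : ExteriorAlgebra ℝ (Module.Dual ℝ V6)) :
    ι ℝ m * (ι ℝ n * z) = -(ι ℝ n * (ι ℝ m * z)) := by
  rw [← mul_assoc, ι_swap2, neg_mul, mul_assoc]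

lemma ι_sq3 (m : Module.Dual ℝ V6) (z : ExteriorAlgebra ℝ (Module.Dual ℝ V6)) :
    ι ℝ m * (ι ℝ m * z) = 0 := by
  rw [← mul_assoc, ι_sq_zero, zero_mul]

@[simp] lemma eval_vco (x : V6) (i : Fin 3) : Module.Dual.eval ℝ V6 x (vco i) = x.1 i := rfl
@[simp] lemma eval_wco (x : V6) (i : Fin 3) : Module.Dual.eval ℝ V6 x (wco i) = x.2 i := rfl

set_option maxHeartbeats 2000000 in
lemma beta_eq (x : V6) : intProd x psi0 =
    (x.2 2) • (ι ℝ (vco 0) * ι ℝ (vco 1))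
      + ((-1) * x.2 1) • (ι ℝ (vco 0) * ι ℝ (vco 2))
      + (x.1 2) • (ι ℝ (vco 0) * ι ℝ (wco 1))
      + ((-1) * x.1 1) • (ι ℝ (vco 0) * ι ℝ (wco 2))
      + (x.2 0) • (ι ℝ (vco 1) * ι ℝ (vco 2))
      + ((-1) * x.1 2) • (ι ℝ (vco 1) * ι ℝ (wco 0))
      + (x.1 0) • (ι ℝ (vco 1) * ι ℝ (wco 2))
      + (x.1 1) • (ι ℝ (vco 2) * ι ℝ (wco 0))
      + ((-1) * x.1 0) • (ι ℝ (vco 2) * ι ℝ (wco 1))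
      + ((-1) * x.2 2) • (ι ℝ (wco 0) * ι ℝ (wco 1))
      + (x.2 1) • (ι ℝ (wco 0) * ι ℝ (wco 2))
      + ((-1) * x.2 0) • (ι ℝ (wco 1) * ι ℝ (wco 2)) := by
  simp only [intProd, psi0, map_add, map_neg, mul_assoc,
    CliffordAlgebra.contractLeft_ι_mul, CliffordAlgebra.contractLeft_ι,
    eval_vco, eval_wco]
  simp only [Algebra.algebraMap_eq_smul_one,
    mul_add, add_mul, mul_sub, sub_mul, mul_neg, neg_mul, mul_smul_comm, smul_mul_assoc,
    mul_one, one_mul, mul_zero, zero_mul, smul_zero, mul_assoc,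
    ι_swap2 (vco 1) (vco 0), ι_swap3 (vco 1) (vco 0), ι_swap2 (vco 2) (vco 0), ι_swap3 (vco 2) (vco 0), ι_swap2 (vco 2) (vco 1), ι_swap3 (vco 2) (vco 1), ι_swap2 (wco 0) (vco 0), ι_swap3 (wco 0) (vco 0), ι_swap2 (wco 0) (vco 1), ι_swap3 (wco 0) (vco 1), ι_swap2 (wco 0) (vco 2), ι_swap3 (wco 0) (vco 2), ι_swap2 (wco 1) (vco 0), ι_swap3 (wco 1) (vco 0), ι_swap2 (wco 1) (vco 1), ι_swap3 (wco 1) (vco 1), ι_swap2 (wco 1) (vco 2), ι_swap3 (wco 1) (vco 2), ι_swap2 (wco 1) (wco 0), ι_swap3 (wco 1) (wco 0), ι_swap2 (wco 2) (vco 0), ι_swap3 (wco 2) (vco 0), ι_swap2 (wco 2) (vco 1), ι_swap3 (wco 2) (vco 1), ι_swap2 (wco 2) (vco 2), ι_swap3 (wco 2) (vco 2), ι_swap2 (wco 2) (wco 0), ι_swap3 (wco 2) (wco 0), ι_swap2 (wco 2) (wco 1), ι_swap3 (wco 2) (wco 1),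
    ι_sq3, ι_sq_zero, neg_neg, smul_neg]
  module

set_option maxHeartbeats 4000000 in
lemma sq_eq (x : V6) : intProd x psi0 * intProd x psi0 =
    ((-2) * x.1 2 * x.2 1 + (2) * x.1 1 * x.2 2) • (ι ℝ (vco 0) * (ι ℝ (vco 1) * (ι ℝ (vco 2) * ι ℝ (wco 0))))
      + ((2) * x.1 2 * x.2 0 + (-2) * x.1 0 * x.2 2) • (ι ℝ (vco 0) * (ι ℝ (vco 1) * (ι ℝ (vco 2) * ι ℝ (wco 1))))
      + ((-2) * x.1 1 * x.2 0 + (2) * x.1 0 * x.2 1) • (ι ℝ (vco 0) * (ι ℝ (vco 1) * (ι ℝ (vco 2) * ι ℝ (wco 2))))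
      + ((-2) * x.2 2 * x.2 2 + (-2) * x.1 2 * x.1 2) • (ι ℝ (vco 0) * (ι ℝ (vco 1) * (ι ℝ (wco 0) * ι ℝ (wco 1))))
      + ((2) * x.2 1 * x.2 2 + (2) * x.1 1 * x.1 2) • (ι ℝ (vco 0) * (ι ℝ (vco 1) * (ι ℝ (wco 0) * ι ℝ (wco 2))))
      + ((-2) * x.2 0 * x.2 2 + (-2) * x.1 0 * x.1 2) • (ι ℝ (vco 0) * (ι ℝ (vco 1) * (ι ℝ (wco 1) * ι ℝ (wco 2))))
      + ((2) * x.2 1 * x.2 2 + (2) * x.1 1 * x.1 2) • (ι ℝ (vco 0) * (ι ℝ (vco 2) * (ι ℝ (wco 0) * ι ℝ (wco 1))))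
      + ((-2) * x.2 1 * x.2 1 + (-2) * x.1 1 * x.1 1) • (ι ℝ (vco 0) * (ι ℝ (vco 2) * (ι ℝ (wco 0) * ι ℝ (wco 2))))
      + ((2) * x.2 0 * x.2 1 + (2) * x.1 0 * x.1 1) • (ι ℝ (vco 0) * (ι ℝ (vco 2) * (ι ℝ (wco 1) * ι ℝ (wco 2))))
      + ((-2) * x.1 2 * x.2 1 + (2) * x.1 1 * x.2 2) • (ι ℝ (vco 0) * (ι ℝ (wco 0) * (ι ℝ (wco 1) * ι ℝ (wco 2))))
      + ((-2) * x.2 0 * x.2 2 + (-2) * x.1 0 * x.1 2) • (ι ℝ (vco 1) * (ι ℝ (vco 2) * (ι ℝ (wco 0) * ι ℝ (wco 1))))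
      + ((2) * x.2 0 * x.2 1 + (2) * x.1 0 * x.1 1) • (ι ℝ (vco 1) * (ι ℝ (vco 2) * (ι ℝ (wco 0) * ι ℝ (wco 2))))
      + ((-2) * x.2 0 * x.2 0 + (-2) * x.1 0 * x.1 0) • (ι ℝ (vco 1) * (ι ℝ (vco 2) * (ι ℝ (wco 1) * ι ℝ (wco 2))))
      + ((2) * x.1 2 * x.2 0 + (-2) * x.1 0 * x.2 2) • (ι ℝ (vco 1) * (ι ℝ (wco 0) * (ι ℝ (wco 1) * ι ℝ (wco 2))))
      + ((-2) * x.1 1 * x.2 0 + (2) * x.1 0 * x.2 1) • (ι ℝ (vco 2) * (ι ℝ (wco 0) * (ι ℝ (wco 1) * ι ℝ (wco 2)))) := by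
  rw [beta_eq]
  simp only [Algebra.algebraMap_eq_smul_one,
    mul_add, add_mul, mul_sub, sub_mul, mul_neg, neg_mul, mul_smul_comm, smul_mul_assoc,
    mul_one, one_mul, mul_zero, zero_mul, smul_zero, mul_assoc,
    ι_swap2 (vco 1) (vco 0), ι_swap3 (vco 1) (vco 0), ι_swap2 (vco 2) (vco 0), ι_swap3 (vco 2) (vco 0), ι_swap2 (vco 2) (vco 1), ι_swap3 (vco 2) (vco 1), ι_swap2 (wco 0) (vco 0), ι_swap3 (wco 0) (vco 0), ι_swap2 (wco 0) (vco 1), ι_swap3 (wco 0) (vco 1), ι_swap2 (wco 0) (vco 2), ι_swap3 (wco 0) (vco 2), ι_swap2 (wco 1) (vco 0), ι_swap3 (wco 1) (vco 0), ι_swap2 (wco 1) (vco 1), ι_swap3 (wco 1) (vco 1), ι_swap2 (wco 1) (vco 2), ι_swap3 (wco 1) (vco 2), ι_swap2 (wco 1) (wco 0), ι_swap3 (wco 1) (wco 0), ι_swap2 (wco 2) (vco 0), ι_swap3 (wco 2) (vco 0), ι_swap2 (wco 2) (vco 1), ι_swap3 (wco 2) (vco 1), ι_swap2 (wco 2) (vco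 2), ι_swap3 (wco 2) (vco 2), ι_swap2 (wco 2) (wco 0), ι_swap3 (wco 2) (wco 0), ι_swap2 (wco 2) (wco 1), ι_swap3 (wco 2) (wco 1),
    ι_sq3, ι_sq_zero, neg_neg, smul_neg]
  module

set_option maxHeartbeats 4000000 in
lemma cube_eq (x : V6) : intProd x psi0 * intProd x psi0 * intProd x psi0 = 0 := by
  rw [sq_eq, beta_eq]
  simp only [Algebra.algebraMap_eq_smul_one,
    mul_add, add_mul, mul_sub, sub_mul, mul_neg, neg_mul, mul_smul_comm, smul_mul_assoc,
    mul_one, one_mul, mul_zero, zero_mul, smul_zero, mul_assoc,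
    ι_swap2 (vco 1) (vco 0), ι_swap3 (vco 1) (vco 0), ι_swap2 (vco 2) (vco 0), ι_swap3 (vco 2) (vco 0), ι_swap2 (vco 2) (vco 1), ι_swap3 (vco 2) (vco 1), ι_swap2 (wco 0) (vco 0), ι_swap3 (wco 0) (vco 0), ι_swap2 (wco 0) (vco 1), ι_swap3 (wco 0) (vco 1), ι_swap2 (wco 0) (vco 2), ι_swap3 (wco 0) (vco 2), ι_swap2 (wco 1) (vco 0), ι_swap3 (wco 1) (vco 0), ι_swap2 (wco 1) (vco 1), ι_swap3 (wco 1) (vco 1), ι_swap2 (wco 1) (vco 2), ι_swap3 (wco 1) (vco 2), ι_swap2 (wco 1) (wco 0), ι_swap3 (wco 1) (wco 0), ι_swap2 (wco 2) (vco 0), ι_swap3 (wco 2) (vco 0), ι_swap2 (wco 2) (vco 1), ι_swap3 (wco 2) (vco 1), ι_swap2 (wco 2) (vco 2), ι_swap3 (wco 2) (vco 2), ι_swap2 (wco 2) (wco 0), ι_swap3 (wco 2) (wco 0), ι_swap2 (wco 2) (wco 1), ι_swap3 (wco 2) (wco 1),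
    ι_sq3, ι_sq_zero, neg_neg, smul_neg]
  module

set_option maxHeartbeats 2000000 in
lemma extr2 (x : V6) : intProd ((![1,0,0] : Fin 3 → ℝ), (0 : Fin 3 → ℝ)) (intProd ((![0,1,0] : Fin 3 → ℝ), (0 : Fin 3 → ℝ)) (intProd ((0 : Fin 3 → ℝ), (![1,0,0] : Fin 3 → ℝ)) (intProd ((0 : Fin 3 → ℝ), (![0,1,0] : Fin 3 → ℝ)) (intProd x psi0 * intProd x psi0)))) =
    (-(2 * (x.1 2 * x.1 2 + x.2 2 * x.2 2))) • 1 := by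
  rw [sq_eq]
  simp only [intProd, map_add, map_smul, map_neg, map_sub, map_zero,
    CliffordAlgebra.contractLeft_ι_mul, CliffordAlgebra.contractLeft_ι,
    CliffordAlgebra.contractLeft_algebraMap,
    eval_vco, eval_wco, Pi.zero_apply, Matrix.cons_val_zero, Matrix.cons_val_one,
    Matrix.head_cons, Matrix.cons_val_two, Matrix.tail_cons,
    zero_smul, one_smul, smul_zero, sub_zero, zero_sub, neg_zero, neg_neg]
  simp only [Algebra.algebraMap_eq_smul_one,
    mul_add, add_mul, mul_sub, sub_mul, mul_neg, neg_mul, mul_smul_comm, smul_mul_assoc,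
    mul_one, one_mul, mul_zero, zero_mul, smul_zero, mul_assoc,
    ι_swap2 (vco 1) (vco 0), ι_swap3 (vco 1) (vco 0), ι_swap2 (vco 2) (vco 0), ι_swap3 (vco 2) (vco 0), ι_swap2 (vco 2) (vco 1), ι_swap3 (vco 2) (vco 1), ι_swap2 (wco 0) (vco 0), ι_swap3 (wco 0) (vco 0), ι_swap2 (wco 0) (vco 1), ι_swap3 (wco 0) (vco 1), ι_swap2 (wco 0) (vco 2), ι_swap3 (wco 0) (vco 2), ι_swap2 (wco 1) (vco 0), ι_swap3 (wco 1) (vco 0), ι_swap2 (wco 1) (vco 1), ι_swap3 (wco 1) (vco 1), ι_swap2 (wco 1) (vco 2), ι_swap3 (wco 1) (vco 2), ι_swap2 (wco 1) (wco 0), ι_swap3 (wco 1) (wco 0), ι_swap2 (wco 2) (vco 0), ι_swap3 (wco 2) (vco 0), ι_swap2 (wco 2) (vco 1), ι_swap3 (wco 2) (vco 1), ι_swap2 (wco 2) (vco 2), ι_swap3 (wco 2) (vco 2), ι_swap2 (wco 2) (wco 0), ι_swap3 (wco 2) (wco 0), ι_swap2 (wco 2) (wco 1), ι_swap3 (wco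 2) (wco 1),
    ι_sq3, ι_sq_zero, neg_neg, smul_neg]
  module

set_option maxHeartbeats 2000000 in
lemma extr1 (x : V6) : intProd ((![1,0,0] : Fin 3 → ℝ), (0 : Fin 3 → ℝ)) (intProd ((![0,0,1] : Fin 3 → ℝ), (0 : Fin 3 → ℝ)) (intProd ((0 : Fin 3 → ℝ), (![1,0,0] : Fin 3 → ℝ)) (intProd ((0 : Fin 3 → ℝ), (![0,0,1] : Fin 3 → ℝ)) (intProd x psi0 * intProd x psi0)))) =
    (-(2 * (x.1 1 * x.1 1 + x.2 1 * x.2 1))) • 1 := by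
  rw [sq_eq]
  simp only [intProd, map_add, map_smul, map_neg, map_sub, map_zero,
    CliffordAlgebra.contractLeft_ι_mul, CliffordAlgebra.contractLeft_ι,
    CliffordAlgebra.contractLeft_algebraMap,
    eval_vco, eval_wco, Pi.zero_apply, Matrix.cons_val_zero, Matrix.cons_val_one,
    Matrix.head_cons, Matrix.cons_val_two, Matrix.tail_cons,
    zero_smul, one_smul, smul_zero, sub_zero, zero_sub, neg_zero, neg_neg]
  simp only [Algebra.algebraMap_eq_smul_one,
    mul_add, add_mul, mul_sub, sub_mul, mul_neg, neg_mul, mul_smul_comm, smul_mul_assoc,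
    mul_one, one_mul, mul_zero, zero_mul, smul_zero, mul_assoc,
    ι_swap2 (vco 1) (vco 0), ι_swap3 (vco 1) (vco 0), ι_swap2 (vco 2) (vco 0), ι_swap3 (vco 2) (vco 0), ι_swap2 (vco 2) (vco 1), ι_swap3 (vco 2) (vco 1), ι_swap2 (wco 0) (vco 0), ι_swap3 (wco 0) (vco 0), ι_swap2 (wco 0) (vco 1), ι_swap3 (wco 0) (vco 1), ι_swap2 (wco 0) (vco 2), ι_swap3 (wco 0) (vco 2), ι_swap2 (wco 1) (vco 0), ι_swap3 (wco 1) (vco 0), ι_swap2 (wco 1) (vco 1), ι_swap3 (wco 1) (vco 1), ι_swap2 (wco 1) (vco 2), ι_swap3 (wco 1) (vco 2), ι_swap2 (wco 1) (wco 0), ι_swap3 (wco 1) (wco 0), ι_swap2 (wco 2) (vco 0), ι_swap3 (wco 2) (vco 0), ι_swap2 (wco 2) (vco 1), ι_swap3 (wco 2) (vco 1), ι_swap2 (wco 2) (vco 2), ι_swap3 (wco 2) (vco 2), ι_swap2 (wco 2) (wco 0), ι_swap3 (wco 2) (wco 0), ι_swap2 (wco 2) (wco 1), ι_swap3 (wco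 2) (wco 1),
    ι_sq3, ι_sq_zero, neg_neg, smul_neg]
  module

set_option maxHeartbeats 2000000 in
lemma extr0 (x : V6) : intProd ((![0,1,0] : Fin 3 → ℝ), (0 : Fin 3 → ℝ)) (intProd ((![0,0,1] : Fin 3 → ℝ), (0 : Fin 3 → ℝ)) (intProd ((0 : Fin 3 → ℝ), (![0,1,0] : Fin 3 → ℝ)) (intProd ((0 : Fin 3 → ℝ), (![0,0,1] : Fin 3 → ℝ)) (intProd x psi0 * intProd x psi0)))) =
    (-(2 * (x.1 0 * x.1 0 + x.2 0 * x.2 0))) • 1 := by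
  rw [sq_eq]
  simp only [intProd, map_add, map_smul, map_neg, map_sub, map_zero,
    CliffordAlgebra.contractLeft_ι_mul, CliffordAlgebra.contractLeft_ι,
    CliffordAlgebra.contractLeft_algebraMap,
    eval_vco, eval_wco, Pi.zero_apply, Matrix.cons_val_zero, Matrix.cons_val_one,
    Matrix.head_cons, Matrix.cons_val_two, Matrix.tail_cons,
    zero_smul, one_smul, smul_zero, sub_zero, zero_sub, neg_zero, neg_neg]
  simp only [Algebra.algebraMap_eq_smul_one,
    mul_add, add_mul, mul_sub, sub_mul, mul_neg, neg_mul, mul_smul_comm, smul_mul_assoc,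
    mul_one, one_mul, mul_zero, zero_mul, smul_zero, mul_assoc,
    ι_swap2 (vco 1) (vco 0), ι_swap3 (vco 1) (vco 0), ι_swap2 (vco 2) (vco 0), ι_swap3 (vco 2) (vco 0), ι_swap2 (vco 2) (vco 1), ι_swap3 (vco 2) (vco 1), ι_swap2 (wco 0) (vco 0), ι_swap3 (wco 0) (vco 0), ι_swap2 (wco 0) (vco 1), ι_swap3 (wco 0) (vco 1), ι_swap2 (wco 0) (vco 2), ι_swap3 (wco 0) (vco 2), ι_swap2 (wco 1) (vco 0), ι_swap3 (wco 1) (vco 0), ι_swap2 (wco 1) (vco 1), ι_swap3 (wco 1) (vco 1), ι_swap2 (wco 1) (vco 2), ι_swap3 (wco 1) (vco 2), ι_swap2 (wco 1) (wco 0), ι_swap3 (wco 1) (wco 0), ι_swap2 (wco 2) (vco 0), ι_swap3 (wco 2) (vco 0), ι_swap2 (wco 2) (vco 1), ι_swap3 (wco 2) (vco 1), ι_swap2 (wco 2) (vco 2), ι_swap3 (wco 2) (vco 2), ι_swap2 (wco 2) (wco 0), ι_swap3 (wco 2) (wco 0), ι_swap2 (wco 2) (wco 1), ι_swap3 (wco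 2) (wco 1),
    ι_sq3, ι_sq_zero, neg_neg, smul_neg]
  module

/-- for every nonzero `x ∈ V`, the 2-form `ι(x)ψ₀` has rank 4:
`(ι(x)ψ₀) ∧ (ι(x)ψ₀) ≠ 0` but `(ι(x)ψ₀)^3 = 0`. -/
theorem stmt_0 (x : V6) (hx : x ≠ 0) :
    intProd x psi0 * intProd x psi0 ≠ 0 ∧
      intProd x psi0 * intProd x psi0 * intProd x psi0 = 0 := by
  refine ⟨?_, cube_eq x⟩
  intro h
  have get : ∀ (c : ℝ), c • (1 : ExteriorAlgebra ℝ (Module.Dual ℝ V6)) = 0 → c = 0 := by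
    intro c hc
    have := congrArg (ExteriorAlgebra.algebraMapInv (R := ℝ)) hc
    simpa using this
  have K0 : x.1 0 = 0 ∧ x.2 0 = 0 := by
    have h0 := extr0 x
    rw [h] at h0
    simp only [intProd, map_zero] at h0
    have hc := get _ h0.symm
    have e1 : x.1 0 * x.1 0 = 0 := by nlinarith [mul_self_nonneg (x.1 0), mul_self_nonneg (x.2 0)]
    have e2 : x.2 0 * x.2 0 = 0 := by nlinarith [mul_self_nonneg (x.1 0), mul_self_nonneg (x.2 0)]
    exact ⟨mul_self_eq_zero.mp e1, mul_self_eq_zero.mp e2⟩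
  have K1 : x.1 1 = 0 ∧ x.2 1 = 0 := by
    have h0 := extr1 x
    rw [h] at h0
    simp only [intProd, map_zero] at h0
    have hc := get _ h0.symm
    have e1 : x.1 1 * x.1 1 = 0 := by nlinarith [mul_self_nonneg (x.1 1), mul_self_nonneg (x.2 1)]
    have e2 : x.2 1 * x.2 1 = 0 := by nlinarith [mul_self_nonneg (x.1 1), mul_self_nonneg (x.2 1)]
    exact ⟨mul_self_eq_zero.mp e1, mul_self_eq_zero.mp e2⟩
  have K2 : x.1 2 = 0 ∧ x.2 2 = 0 := by
    have h0 := extr2 x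
    rw [h] at h0
    simp only [intProd, map_zero] at h0
    have hc := get _ h0.symm
    have e1 : x.1 2 * x.1 2 = 0 := by nlinarith [mul_self_nonneg (x.1 2), mul_self_nonneg (x.2 2)]
    have e2 : x.2 2 * x.2 2 = 0 := by nlinarith [mul_self_nonneg (x.1 2), mul_self_nonneg (x.2 2)]
    exact ⟨mul_self_eq_zero.mp e1, mul_self_eq_zero.mp e2⟩
  apply hx
  refine Prod.ext_iff.mpr ⟨?_, ?_⟩ <;> funext i
  · match i with
    | 0 => exact K0.1
    | 1 => exact K1.1
    | 2 => exact K2.1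
  · match i with
    | 0 => exact K0.2
    | 1 => exact K1.2
    | 2 => exact K2.2

end
end

section
/- Irreflexivity under symmetry: if there exists a family (e_t, K_t), t ∈ [t₁,t₂] with t₁ < t₂, such that ∂e^i/∂t = Σ_j (K_{ij})_t e^j_t with (1/2)(K_t + K_tᵀ) positive-definite for all t, then e^{123}_{t₂} ≠ e^{123}_{t₁}; more precisely, writing e^{123}_t = ρ(t) e^{123}_{t₁} pointwise with ρ(t₁) = 1, one has ρ'(t) = tr(K_t)ρ(t) with tr(K_t) > 0, hence ρ(t₂) > 1. Consequently the relation ≺^{inv} on 𝒞^{inv}(M) is irreflexive: ψ ⊀^{inv} ψ for every ψ. -/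
open Matrix

/-- irreflexivity under symmetry (pointwise form).  If a family of
coframes, written as a matrix family `E t` in a fixed basis (so that the volume
form is `e^{123}_t = det (E t) ·` a fixed 3-form, with `det (E t₁) > 0`),
satisfies `∂e^i/∂t = Σ_j (K_{ij})_t e^j_t`, i.e. `E' = K E` entrywise, with the
symmetrization `(1/2)(K_t + K_tᵀ)` positive-definite on `[t₁,t₂]`, `t₁ < t₂`,
then the ratio `ρ t = det (E t) / det (E t₁)` satisfies `ρ(t₁) = 1`,
`ρ' = tr(K_t) ρ` with `tr (K_t) > 0`, hence `ρ(t₂) > 1`; consequently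
`e^{123}_{t₂} ≠ e^{123}_{t₁}`, which is the irreflexivity `ψ ⊀^inv ψ` of the
relation `≺^inv` on `𝒞^inv(M)`. -/
theorem stmt_14 (t₁ t₂ : ℝ) (ht : t₁ < t₂) (E K : ℝ → Matrix (Fin 3) (Fin 3) ℝ)
    (hdet : 0 < (E t₁).det)
    (hE : ∀ t ∈ Set.Icc t₁ t₂, ∀ i j,
      HasDerivWithinAt (fun s => E s i j) ((K t * E t) i j) (Set.Icc t₁ t₂) t)
    (hK : ∀ t ∈ Set.Icc t₁ t₂, ((1 / 2 : ℝ) • (K t + (K t)ᵀ)).PosDef) :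
    (fun t => (E t).det / (E t₁).det) t₁ = 1 ∧
    (∀ t ∈ Set.Icc t₁ t₂,
      HasDerivWithinAt (fun s => (E s).det / (E t₁).det)
        ((K t).trace * ((E t).det / (E t₁).det)) (Set.Icc t₁ t₂) t ∧
      0 < (K t).trace) ∧
    1 < (E t₂).det / (E t₁).det ∧ (E t₂).det ≠ (E t₁).det := by
  -- positivity of the trace of `K t`
  have htr : ∀ t ∈ Set.Icc t₁ t₂, 0 < (K t).trace := by
    intro t htm
    have h := hK t htm
    set S := (1 / 2 : ℝ) • (K t + (K t)ᵀ) with hSdef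
    have hdiag : ∀ i : Fin 3, 0 < S i i := by
      intro i
      have h1 := h.dotProduct_mulVec_pos (x := Pi.single i 1) (by simp [Function.ne_iff])
      simpa [dotProduct, Matrix.mulVec, Pi.single_apply, Finset.mul_sum] using h1
    have htrS : 0 < S.trace := by
      have hts : S.trace = ∑ i, S i i := rfl
      rw [hts]
      exact Finset.sum_pos (fun i _ => hdiag i) Finset.univ_nonempty
    have hEq : S.trace = (K t).trace := by
      simp [hSdef, Matrix.trace_smul, Matrix.trace_add, Matrix.trace_transpose, smul_eq_mul]
      ring
    linarith
  -- Liouville / Jacobi formula for the determinant (explicit for `Fin 3`)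
  have hdetD : ∀ t ∈ Set.Icc t₁ t₂, HasDerivWithinAt (fun s => (E s).det)
      ((K t).trace * (E t).det) (Set.Icc t₁ t₂) t := by
    intro t htm
    have h := hE t htm
    have H := (((((((h 0 0).mul (h 1 1)).mul (h 2 2)).sub
        (((h 0 0).mul (h 1 2)).mul (h 2 1))).sub
        (((h 0 1).mul (h 1 0)).mul (h 2 2))).add
        (((h 0 1).mul (h 1 2)).mul (h 2 0))).add
        (((h 0 2).mul (h 1 0)).mul (h 2 1))).sub
        (((h 0 2).mul (h 1 1)).mul (h 2 0))
    have hfun : (fun s => (E s).det) = (fun s =>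
        E s 0 0 * E s 1 1 * E s 2 2 - E s 0 0 * E s 1 2 * E s 2 1 -
        E s 0 1 * E s 1 0 * E s 2 2 + E s 0 1 * E s 1 2 * E s 2 0 +
        E s 0 2 * E s 1 0 * E s 2 1 - E s 0 2 * E s 1 1 * E s 2 0) := by
      funext s; rw [Matrix.det_fin_three]
    rw [hfun]
    refine H.congr_deriv ?_
    simp [Pi.mul_apply, Matrix.mul_apply, Fin.sum_univ_three, Matrix.trace_fin_three, Matrix.det_fin_three]
    ring
  have hcont : ContinuousOn (fun s => (E s).det) (Set.Icc t₁ t₂) :=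
    fun x hx => (hdetD x hx).continuousWithinAt
  -- lower bound: `det (E t₁) ≤ det (E t)` on `[t₁, t₂]` (fencing / barrier argument)
  have hlow : ∀ x ∈ Set.Icc t₁ t₂, (E t₁).det ≤ (E x).det := by
    have := image_le_of_deriv_right_lt_deriv_boundary'
      (f := fun _ : ℝ => (E t₁).det) (f' := fun _ => 0) (a := t₁) (b := t₂)
      (B := fun s => (E s).det) (B' := fun s => (K s).trace * (E s).det)
      (continuousOn_const)
      (fun x _ => (hasDerivWithinAt_const x _ _))
      (le_refl _)
      hcont
      (fun x hx => (hdetD x (Set.Ico_subset_Icc_self hx)).mono_of_mem_nhdsWithin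
        (Icc_mem_nhdsGE_of_mem hx))
      (fun x hx hfx => by
        rw [← hfx]
        exact mul_pos (htr x (Set.Ico_subset_Icc_self hx)) hdet)
    exact fun x hx => this hx
  -- strict monotonicity of the determinant on `[t₁, t₂]`
  have hmono : StrictMonoOn (fun s => (E s).det) (Set.Icc t₁ t₂) := by
    apply strictMonoOn_of_hasDerivWithinAt_pos (convex_Icc t₁ t₂) hcont
      (f' := fun s => (K s).trace * (E s).det)
    · intro x hx
      rw [interior_Icc] at hx ⊢
      exact (hdetD x (Set.Ioo_subset_Icc_self hx)).mono Set.Ioo_subset_Icc_self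
    · intro x hx
      rw [interior_Icc] at hx
      exact mul_pos (htr x (Set.Ioo_subset_Icc_self hx))
        (lt_of_lt_of_le hdet (hlow x (Set.Ioo_subset_Icc_self hx)))
  have hlt : (E t₁).det < (E t₂).det :=
    hmono ⟨le_refl _, ht.le⟩ ⟨ht.le, le_refl _⟩ ht
  refine ⟨by simp [div_self hdet.ne'], ?_, ?_, ?_⟩
  · intro t htm
    refine ⟨?_, htr t htm⟩
    have := (hdetD t htm).div_const ((E t₁).det)
    refine this.congr_deriv ?_
    ring
  · exact (one_lt_div hdet).mpr hlt
  · exact ne_of_gt hlt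
end
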